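/- Let X be a separable Banach space, let (x_n)_{n≥1} be a dense sequence in X, and let (x_n^*)_{n≥1} ⊆ X^* be a norming sequence for it, i.e., ‖x_n^*‖ = 1 and ⟨x_n, x_n^*⟩ = ‖x_n‖ for every n. Let (Ω,F,P) be a probability space with a filtration (F_t)_{t≥0}, and let M : [0,∞) × Ω → X be an adapted process all of whose paths are càdlàg. Then: (III) M is quasi-left continuous if and only if for every n ≥ 1 the real-valued process t ↦ ⟨M_t, x_n^*⟩ is quasi-left continuous; and (IV) M has accessible jumps if and only if for every n ≥ 1 the process t ↦ ⟨M_t, x_n^*⟩ has accessible jumps. -/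

import Mathlib

open MeasureTheory ProbabilityTheory Filter Set
open scoped ENNReal NNReal Topology

/-- `τ` is a predictable stopping time: it is a stopping time announced by a nondecreasing
sequence of stopping times `τs` with `τs k < τ` a.s. on `{τ > 0}` and `τs k → τ` a.s. -/
def IsPredictableTime {Ω : Type*} {mΩ : MeasurableSpace Ω} (μ : Measure Ω)
    (ℱ : Filtration ℝ≥0 mΩ) (τ : Ω → ℝ≥0) : Prop :=
  IsStoppingTime ℱ (fun ω => (τ ω : WithTop ℝ≥0)) ∧ ∃ τs : ℕ → Ω → ℝ≥0, (∀ k, IsStoppingTime ℱ (fun ω => (τs k ω : WithTop ℝ≥0))) ∧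
    (∀ k ω, τs k ω ≤ τs (k + 1) ω) ∧
    (∀ᵐ ω ∂μ, 0 < τ ω → ∀ k, τs k ω < τ ω) ∧
    (∀ᵐ ω ∂μ, Tendsto (fun k => τs k ω) atTop (𝓝 (τ ω)))

/-- `τ` is a totally inaccessible stopping time: `P(τ = σ) = 0` for every predictable
stopping time `σ`. -/
def IsTotallyInaccessibleTime {Ω : Type*} {mΩ : MeasurableSpace Ω} (μ : Measure Ω)
    (ℱ : Filtration ℝ≥0 mΩ) (τ : Ω → ℝ≥0) : Prop :=
  IsStoppingTime ℱ (fun ω => (τ ω : WithTop ℝ≥0)) ∧ ∀ σ : Ω → ℝ≥0, IsPredictableTime μ ℱ σ → μ {ω | τ ω = σ ω} = 0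

/-- The (càdlàg) process `A` has zero jump at the random time `τ` almost surely: for a.e. `ω`
with `τ ω > 0` the left limit of `s ↦ A s ω` at `τ ω` equals `A (τ ω) ω`. -/
def HasZeroJumpAt {Ω E : Type*} [TopologicalSpace E] {mΩ : MeasurableSpace Ω}
    (μ : Measure Ω) (A : ℝ≥0 → Ω → E) (τ : Ω → ℝ≥0) : Prop :=
  ∀ᵐ ω ∂μ, 0 < τ ω → Tendsto (fun s => A s ω) (𝓝[<] (τ ω)) (𝓝 (A (τ ω) ω))

/-- A process is quasi-left continuous if it has zero jump at every predictable stopping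
time. -/
def IsQuasiLeftContinuous {Ω E : Type*} [TopologicalSpace E] {mΩ : MeasurableSpace Ω}
    (μ : Measure Ω) (ℱ : Filtration ℝ≥0 mΩ) (A : ℝ≥0 → Ω → E) : Prop :=
  ∀ τ : Ω → ℝ≥0, IsPredictableTime μ ℱ τ → HasZeroJumpAt μ A τ

/-- A process has accessible jumps if it has zero jump at every totally inaccessible stopping
time. -/
def HasAccessibleJumps {Ω E : Type*} [TopologicalSpace E] {mΩ : MeasurableSpace Ω}
    (μ : Measure Ω) (ℱ : Filtration ℝ≥0 mΩ) (A : ℝ≥0 → Ω → E) : Prop :=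
  ∀ τ : Ω → ℝ≥0, IsTotallyInaccessibleTime μ ℱ τ → HasZeroJumpAt μ A τ

/-- A norming sequence of functionals separates points. -/
lemma norming_separates {X : Type*} [NormedAddCommGroup X] [NormedSpace ℝ X]
    (x : ℕ → X) (hx : DenseRange x)
    (x' : ℕ → X →L[ℝ] ℝ) (hnorming : ∀ n, ‖x' n‖ = 1 ∧ x' n (x n) = ‖x n‖)
    (z : X) (hz : ∀ n, x' n z = 0) : z = 0 := by
  by_contra h
  have hz0 : 0 < ‖z‖ := norm_pos_iff.mpr h
  obtain ⟨n, hn⟩ : ∃ n, ‖x n - z‖ < ‖z‖ / 2 := by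
    obtain ⟨n, hn⟩ := Metric.denseRange_iff.mp hx z (‖z‖ / 2) (by positivity)
    exact ⟨n, by rw [norm_sub_rev]; simpa [dist_eq_norm] using hn⟩
  have h1 : |x' n (x n - z)| ≤ ‖x n - z‖ := by
    calc |x' n (x n - z)| ≤ ‖x' n‖ * ‖x n - z‖ := (x' n).le_opNorm _
    _ = ‖x n - z‖ := by rw [(hnorming n).1, one_mul]
  have h2 : x' n (x n - z) = ‖x n‖ := by
    rw [map_sub, hz n, (hnorming n).2, sub_zero]
  have h3 : ‖z‖ - ‖x n - z‖ ≤ ‖x n‖ := by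
    have := norm_sub_norm_le z (x n)
    have h4 : ‖z - x n‖ = ‖x n - z‖ := norm_sub_rev _ _
    linarith
  rw [h2, abs_of_nonneg (by rw [← h2, h2]; positivity)] at h1
  linarith

/-- Key step: if all norming functionals of a càdlàg process have zero jump at `τ`, then so
does the process itself. -/
lemma hasZeroJumpAt_of_norming {Ω : Type*} {mΩ : MeasurableSpace Ω} (μ : Measure Ω)
    {X : Type*} [NormedAddCommGroup X] [NormedSpace ℝ X]
    (x : ℕ → X) (hx : DenseRange x)
    (x' : ℕ → X →L[ℝ] ℝ) (hnorming : ∀ n, ‖x' n‖ = 1 ∧ x' n (x n) = ‖x n‖)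
    (M : ℝ≥0 → Ω → X)
    (hleft : ∀ ω, ∀ t : ℝ≥0, 0 < t → ∃ L : X, Tendsto (fun s => M s ω) (𝓝[<] t) (𝓝 L))
    (τ : Ω → ℝ≥0) (h : ∀ n, HasZeroJumpAt μ (fun t ω => x' n (M t ω)) τ) :
    HasZeroJumpAt μ M τ := by
  have hall : ∀ᵐ ω ∂μ, ∀ n, 0 < τ ω →
      Tendsto (fun s => x' n (M s ω)) (𝓝[<] (τ ω)) (𝓝 (x' n (M (τ ω) ω))) :=
    ae_all_iff.mpr h
  filter_upwards [hall] with ω hω hτ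
  obtain ⟨L, hL⟩ := hleft ω (τ ω) hτ
  haveI : (𝓝[<] (τ ω)).NeBot := nhdsWithin_Iio_self_neBot' ⟨0, hτ⟩
  have hLeq : L = M (τ ω) ω := by
    have hdiff : ∀ n, x' n (L - M (τ ω) ω) = 0 := by
      intro n
      have h1 : Tendsto (fun s => x' n (M s ω)) (𝓝[<] (τ ω)) (𝓝 (x' n L)) :=
        ((x' n).continuous.tendsto L).comp hL
      have h2 := tendsto_nhds_unique h1 (hω n hτ)
      rw [map_sub, h2, sub_self]
    have := norming_separates x hx x' hnorming _ hdiff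
    exact sub_eq_zero.mp this
  rwa [← hLeq]

/-- Quasi-left continuity and accessibility of jumps of a càdlàg adapted `X`-valued process can
be tested against a norming sequence of functionals. -/
theorem quasiLeftContinuous_and_accessibleJumps_iff_norming_functionals
    {Ω : Type*} {mΩ : MeasurableSpace Ω} (μ : Measure Ω) [IsProbabilityMeasure μ]
    (X : Type*) [NormedAddCommGroup X] [NormedSpace ℝ X] [CompleteSpace X]
    (x : ℕ → X) (hx : DenseRange x)
    (x' : ℕ → X →L[ℝ] ℝ) (hnorming : ∀ n, ‖x' n‖ = 1 ∧ x' n (x n) = ‖x n‖)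
    (ℱ : Filtration ℝ≥0 mΩ) (M : ℝ≥0 → Ω → X) (hadapted : StronglyAdapted ℱ M)
    (hright : ∀ ω, ∀ t : ℝ≥0, ContinuousWithinAt (fun s => M s ω) (Set.Ici t) t)
    (hleft : ∀ ω, ∀ t : ℝ≥0, 0 < t → ∃ L : X, Tendsto (fun s => M s ω) (𝓝[<] t) (𝓝 L)) :
    (IsQuasiLeftContinuous μ ℱ M ↔
      ∀ n : ℕ, IsQuasiLeftContinuous μ ℱ (fun t ω => x' n (M t ω))) ∧
    (HasAccessibleJumps μ ℱ M ↔
      ∀ n : ℕ, HasAccessibleJumps μ ℱ (fun t ω => x' n (M t ω))) := by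
  have fwd : ∀ (τ : Ω → ℝ≥0), HasZeroJumpAt μ M τ → ∀ n,
      HasZeroJumpAt μ (fun t ω => x' n (M t ω)) τ := by
    intro τ hτ n
    filter_upwards [hτ] with ω hω h0
    exact ((x' n).continuous.tendsto _).comp (hω h0)
  constructor
  · constructor
    · intro hM n τ hτ
      exact fwd τ (hM τ hτ) n
    · intro h τ hτ
      exact hasZeroJumpAt_of_norming μ x hx x' hnorming M hleft τ (fun n => h n τ hτ)
  · constructor
    · intro hM n τ hτ
      exact fwd τ (hM τ hτ) n
    · intro h τ hτ
      exact hasZeroJumpAt_of_norming μ x hx x' hnorming M hleft τ (fun n => h n τ hτ)
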